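/- Let (S, ⪯) be a rooted tree and let X be a random variable with values in S whose PDF f has support S and constant rate α. Then d(X) has the geometric distribution on ℕ with rate α: P(d(X) ≥ n) = (1 − α)^n for all n ∈ ℕ. -/

import Mathlib

open scoped ENNReal NNReal

/-- The upper probability function (UPF) of a density `f` on a discrete poset:
`F x = ∑_{t ⪰ x} f t`, computed in `[0,∞]`. -/
noncomputable def upf {S : Type*} [PartialOrder S] (f : S → ℝ≥0) (x : S) : ℝ≥0∞ :=
  ∑' t : {t : S // x ≤ t}, (f t : ℝ≥0∞)

/-- The depth of a node in a rooted tree: `d x = #(D[x]) − 1`. -/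
noncomputable def depth {S : Type*} [PartialOrder S] (x : S) : ℕ :=
  Nat.card {t : S // t ≤ x} - 1

section aux
variable {S : Type*} [PartialOrder S] [OrderBot S] (hfin : ∀ x : S, {t : S | t ≤ x}.Finite)
include hfin

lemma depth_eq (x : S) : depth x = {t : S | t ≤ x}.ncard - 1 := by
  rw [depth, ← Nat.card_coe_set_eq]
  rfl

lemma ncard_pos' (x : S) : 0 < {t : S | t ≤ x}.ncard :=
  Set.ncard_pos (hfin x) |>.2 ⟨⊥, bot_le⟩

lemma depth_lt_depth {a b : S} (h : a < b) : depth a < depth b := by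
  rw [depth_eq hfin, depth_eq hfin]
  have hsub : {t : S | t ≤ a} ⊂ {t : S | t ≤ b} := by
    constructor
    · intro t ht; exact le_trans ht h.le
    · intro hc; exact absurd (hc (le_refl b)) (by simp [h.not_ge])
  have := Set.ncard_lt_ncard hsub (hfin b)
  exact Nat.sub_lt_sub_right (ncard_pos' hfin a) this

lemma depth_le_depth {a b : S} (h : a ≤ b) : depth a ≤ depth b := by
  rcases eq_or_lt_of_le h with rfl | h
  · exact le_rfl
  · exact (depth_lt_depth hfin h).le

lemma eq_of_le_of_depth_eq {a b : S} (h : a ≤ b) (hd : depth a = depth b) : a = b := by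
  rcases eq_or_lt_of_le h with rfl | h
  · rfl
  · exact absurd hd (depth_lt_depth hfin h).ne

lemma card_D (x : S) : {t : S | t ≤ x}.ncard = depth x + 1 := by
  have := ncard_pos' hfin x
  rw [depth_eq hfin]
  omega

variable (htree : ∀ x a b : S, a ≤ x → b ≤ x → a ≤ b ∨ b ≤ a)
include htree

lemma exists_ancestor {t : S} {n : ℕ} (hn : n ≤ depth t) : ∃ x : S, x ≤ t ∧ depth x = n := by
  classical
  set Dt := (hfin t).toFinset with hDt
  have hmemDt : ∀ s, s ∈ Dt ↔ s ≤ t := by intro s; simp [hDt, Set.Finite.mem_toFinset]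
  have hcardDt : Dt.card = depth t + 1 := by
    rw [hDt, ← Set.ncard_eq_toFinset_card _ (hfin t)]
    exact card_D hfin t
  have hinj : Set.InjOn depth (Dt : Set S) := by
    intro a ha b hb hab
    rcases htree t a b ((hmemDt a).1 ha) ((hmemDt b).1 hb) with h | h
    · exact eq_of_le_of_depth_eq hfin h hab
    · exact (eq_of_le_of_depth_eq hfin h hab.symm).symm
  have hsub : Dt.image depth ⊆ Finset.range (depth t + 1) := by
    intro m hm
    simp only [Finset.mem_image] at hm
    obtain ⟨s, hs, rfl⟩ := hm
    exact Finset.mem_range.2 (Nat.lt_succ_of_le (depth_le_depth hfin ((hmemDt s).1 hs)))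
  have heq : Dt.image depth = Finset.range (depth t + 1) := by
    apply Finset.eq_of_subset_of_card_le hsub
    rw [Finset.card_image_of_injOn hinj, hcardDt, Finset.card_range]
  have : n ∈ Dt.image depth := by
    rw [heq]; exact Finset.mem_range.2 (Nat.lt_succ_of_le hn)
  simp only [Finset.mem_image] at this
  obtain ⟨x, hx, hxd⟩ := this
  exact ⟨x, (hmemDt x).1 hx, hxd⟩

/-- Key regrouping: the sum of `f` over nodes of depth ≥ n equals
the sum of UPFs over nodes of depth exactly n. -/
lemma tsum_level (f : S → ℝ≥0) (n : ℕ) :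
    ∑' t : {t : S // n ≤ depth t}, (f t : ℝ≥0∞)
      = ∑' x : {x : S // depth x = n}, upf f x := by
  classical
  -- sigma type
  let F : (Σ x : {x : S // depth x = n}, {t : S // (x : S) ≤ t}) → {t : S // n ≤ depth t} :=
    fun p => ⟨p.2, by
      have h1 : depth (p.1 : S) ≤ depth (p.2 : S) := depth_le_depth hfin p.2.2
      have h2 : depth (p.1 : S) = n := p.1.2
      omega⟩
  have hFbij : Function.Bijective F := by
    constructor
    · rintro ⟨⟨x, hx⟩, ⟨t, hxt⟩⟩ ⟨⟨y, hy⟩, ⟨u, hyu⟩⟩ h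
      have ht : t = u := congrArg Subtype.val h
      subst ht
      have hxy : x = y := by
        rcases htree t x y hxt hyu with h' | h'
        · exact eq_of_le_of_depth_eq hfin h' (hx.trans hy.symm)
        · exact (eq_of_le_of_depth_eq hfin h' (hy.trans hx.symm)).symm
      subst hxy
      rfl
    · rintro ⟨t, ht⟩
      obtain ⟨x, hxt, hxd⟩ := exists_ancestor hfin htree ht
      exact ⟨⟨⟨x, hxd⟩, ⟨t, hxt⟩⟩, rfl⟩
  calc ∑' t : {t : S // n ≤ depth t}, (f t : ℝ≥0∞)
      = ∑' p : (Σ x : {x : S // depth x = n}, {t : S // (x : S) ≤ t}),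
          (f (F p) : ℝ≥0∞) := ((Equiv.ofBijective F hFbij).tsum_eq
            (fun t : {t : S // n ≤ depth t} => (f t : ℝ≥0∞))).symm
    _ = ∑' x : {x : S // depth x = n}, ∑' t : {t : S // (x : S) ≤ t}, (f t : ℝ≥0∞) :=
        ENNReal.tsum_sigma' _
    _ = ∑' x : {x : S // depth x = n}, upf f x := rfl

end aux

/-- Let `(S, ⪯)` be a rooted tree and `X` a random variable in `S`
whose PDF `f` has support `S` and constant rate `α`. Then `d(X)` is geometric with
rate `α`: `P(d(X) ≥ n) = (1 − α)ⁿ` for all `n ∈ ℕ`. -/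
theorem tree_depth_geometric_of_constantRate
    {S : Type*} [Countable S] [PartialOrder S] [OrderBot S] [MeasurableSpace S]
    [MeasurableSingletonClass S]
    (hfin : ∀ x : S, {t : S | t ≤ x}.Finite)
    (htree : ∀ x a b : S, a ≤ x → b ≤ x → a ≤ b ∨ b ≤ a)
    (f : S → ℝ≥0)
    (hsupp : ∀ x : S, 0 < f x)
    (hpdf : ∑' x : S, (f x : ℝ≥0∞) = 1)
    (α : ℝ) (hα : 0 < α)
    (hrate : ∀ x : S, (f x : ℝ≥0∞) = ENNReal.ofReal α * upf f x)
    {Ω : Type*} [MeasurableSpace Ω] (P : MeasureTheory.Measure Ω)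
    [MeasureTheory.IsProbabilityMeasure P]
    (X : Ω → S) (hX : Measurable X)
    (hdist : ∀ x : S, P (X ⁻¹' {x}) = (f x : ℝ≥0∞)) :
    ∀ n : ℕ, P {ω | n ≤ depth (X ω)} = ENNReal.ofReal (1 - α) ^ n := by
  classical
  -- G n := sum of f over nodes of depth ≥ n
  set G : ℕ → ℝ≥0∞ := fun n => ∑' t : {t : S | n ≤ depth t}, (f t : ℝ≥0∞) with hG
  -- measure equals G n
  have hmeas : ∀ n : ℕ, P {ω | n ≤ depth (X ω)} = G n := by
    intro n
    have hset : {ω | n ≤ depth (X ω)} = X ⁻¹' {t : S | n ≤ depth t} := rfl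
    have hU : X ⁻¹' {t : S | n ≤ depth t}
        = ⋃ a : {t : S | n ≤ depth t}, X ⁻¹' {(a : S)} := by
      ext ω; simp
    rw [hset, hU, MeasureTheory.measure_iUnion]
    · simp_rw [hdist]; rfl
    · intro a b hab
      simp only [Function.onFun, Set.disjoint_left]
      intro ω h1 h2
      simp only [Set.mem_preimage, Set.mem_singleton_iff] at h1 h2
      exact hab (Subtype.ext (h1 ▸ h2))
    · exact fun a => hX (measurableSet_singleton _)
  -- G 0 = 1
  have hG0 : G 0 = 1 := by
    rw [hG]
    rw [← hpdf]
    exact (Equiv.subtypeUnivEquiv (fun t => Nat.zero_le _)).tsum_eq (fun t => (f t : ℝ≥0∞))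
  -- G n ≤ 1 < ∞
  have hGle : ∀ n, G n ≤ 1 := by
    intro n
    rw [hG, ← hpdf]
    exact ENNReal.tsum_comp_le_tsum_of_injective Subtype.val_injective _
  have hGne : ∀ n, G n ≠ ∞ := fun n => (lt_of_le_of_lt (hGle n) ENNReal.one_lt_top).ne
  -- α ≤ 1
  have hupfbot : upf f (⊥ : S) = 1 := by
    rw [upf, ← hpdf]
    exact (Equiv.subtypeUnivEquiv (fun t => bot_le)).tsum_eq (fun t => (f t : ℝ≥0∞))
  have hα1 : α ≤ 1 := by
    have h1 : (f (⊥ : S) : ℝ≥0∞) = ENNReal.ofReal α := by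
      rw [hrate ⊥, hupfbot, mul_one]
    have h2 : (f (⊥ : S) : ℝ≥0∞) ≤ 1 := by
      rw [← hpdf]; exact ENNReal.le_tsum _
    rw [h1] at h2
    exact ENNReal.ofReal_le_one.1 h2
  -- regrouping
  have hlevel : ∀ n : ℕ, G n = ∑' x : {x : S // depth x = n}, upf f x := fun n =>
    tsum_level hfin htree f n
  -- splitting
  have hsplit : ∀ n : ℕ, G n = (∑' x : {x : S | depth x = n}, (f x : ℝ≥0∞)) + G (n + 1) := by
    intro n
    have hun : {x : S | depth x = n} ∪ {x : S | n + 1 ≤ depth x} = {x : S | n ≤ depth x} := by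
      ext x; simp only [Set.mem_union, Set.mem_setOf_eq]; omega
    have hdisj : Disjoint {x : S | depth x = n} {x : S | n + 1 ≤ depth x} := by
      rw [Set.disjoint_left]; intro x h1 h2
      simp only [Set.mem_setOf_eq] at h1 h2; omega
    rw [hG]
    simp only
    rw [← hun]
    exact Summable.tsum_union_disjoint (f := fun s => ((f s : ℝ≥0) : ℝ≥0∞)) hdisj
      ENNReal.summable ENNReal.summable
  -- recursion
  have hrec : ∀ n : ℕ, G (n + 1) = ENNReal.ofReal (1 - α) * G n := by
    intro n
    have h1 : (∑' x : {x : S | depth x = n}, (f x : ℝ≥0∞)) = ENNReal.ofReal α * G n := by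
      calc (∑' x : {x : S | depth x = n}, (f x : ℝ≥0∞))
          = ∑' x : {x : S // depth x = n}, ENNReal.ofReal α * upf f x := by
            exact tsum_congr fun x => hrate x
        _ = ENNReal.ofReal α * ∑' x : {x : S // depth x = n}, upf f x :=
            ENNReal.tsum_mul_left
        _ = ENNReal.ofReal α * G n := by rw [← hlevel n]
    have h2 : G (n + 1) + ENNReal.ofReal α * G n = G n := by
      rw [add_comm, ← h1, ← hsplit n]
    have h3 : G (n + 1) = G n - ENNReal.ofReal α * G n :=
      ENNReal.eq_sub_of_add_eq (ENNReal.mul_ne_top ENNReal.ofReal_ne_top (hGne n)) h2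
    rw [h3, ENNReal.ofReal_sub 1 hα.le, ENNReal.ofReal_one,
      ENNReal.sub_mul fun _ _ => hGne n, one_mul]
  -- induction
  intro n
  rw [hmeas n]
  induction n with
  | zero => simpa using hG0
  | succ k ih =>
    rw [hrec k, ih, pow_succ, mul_comm]
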